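/- Let p ≥ 1 and let G = (V,E) be a connected, locally finite simple graph. If (Γ_n)_{n∈ℕ} is a countable collection of families of infinite paths in G such that each Γ_n is p-null, then the union ∪_{n∈ℕ} Γ_n is p-null. -/

import Mathlib

open Filter Topology Metric
open scoped ENNReal Classical

/-- The `p`-Dirichlet energy of `f`: half the sum of `|f u - f v| ^ p` over
ordered pairs of adjacent vertices. -/
noncomputable def dirichletEnergy {V : Type*} (G : SimpleGraph V) (p : ℝ) (f : V → ℝ) : ℝ :=
  (1 / 2) * ∑' q : {q : V × V // G.Adj q.1 q.2}, |f q.1.1 - f q.1.2| ^ p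

/-- `f` is `p`-Dirichlet, i.e. `D_p(f) < ∞`. -/
def DirichletSummable {V : Type*} (G : SimpleGraph V) (p : ℝ) (f : V → ℝ) : Prop :=
  Summable fun q : {q : V × V // G.Adj q.1 q.2} => |f q.1.1 - f q.1.2| ^ p

/-- `G` is `p`-parabolic: for some vertex `v₀`, the infimum of `D_p(f)` over finitely
supported `f` with `f v₀ = 1` equals `0`. -/
def Parabolic {V : Type*} (G : SimpleGraph V) (p : ℝ) : Prop :=
  ∃ v₀ : V, ∀ ε : ℝ, 0 < ε → ∃ f : V → ℝ,
    (Function.support f).Finite ∧ f v₀ = 1 ∧ dirichletEnergy G p f < ε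

/-- The `p`-Laplacian `Δ_p f (v) = Σ_{u ~ v} |f u - f v| ^ (p-2) (f u - f v)`. -/
noncomputable def pLaplacian {V : Type*} (G : SimpleGraph V) (p : ℝ) (f : V → ℝ) (v : V) : ℝ :=
  ∑' u, if G.Adj u v then |f u - f v| ^ (p - 2) * (f u - f v) else 0

/-- `f` is `p`-harmonic: `Δ_p f = 0` everywhere. -/
def IsPHarmonic {V : Type*} (G : SimpleGraph V) (p : ℝ) (f : V → ℝ) : Prop :=
  ∀ v, pLaplacian G p f v = 0

/-- `G` is locally finite. -/
def LocFin {V : Type*} (G : SimpleGraph V) : Prop := ∀ v, (G.neighborSet v).Finite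

/-- `G` has uniformly bounded vertex degrees. -/
def BddDeg {V : Type*} (G : SimpleGraph V) : Prop := ∃ D : ℕ, ∀ v, (G.neighborSet v).ncard ≤ D

/-- A quasi-sphere packing of `G` in `ℝ^d` with constant `C`. -/
def IsQuasiSpherePacking {V : Type*} (G : SimpleGraph V) (d : ℕ) (C : ℝ)
    (P : V → Set (EuclideanSpace ℝ (Fin d))) : Prop :=
  (∀ v, IsCompact (P v)) ∧
  (∃ (z : V → EuclideanSpace ℝ (Fin d)) (r : V → ℝ),
    ∀ v, 0 < r v ∧ closedBall (z v) (r v) ⊆ P v ∧ P v ⊆ closedBall (z v) (C * r v)) ∧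
  (Pairwise fun u v => Disjoint (interior (P u)) (interior (P v))) ∧
  (∀ u v, u ≠ v → ((P u ∩ P v).Nonempty ↔ G.Adj u v))

/-- `G` is quasi-sphere packable in `ℝ^d`. -/
def QuasiSpherePackable {V : Type*} (G : SimpleGraph V) (d : ℕ) : Prop :=
  ∃ C : ℝ, 1 ≤ C ∧ ∃ P : V → Set (EuclideanSpace ℝ (Fin d)), IsQuasiSpherePacking G d C P

/-- The `m`-length of a finite walk: the sum of `m` over its edges. -/
noncomputable def walkLength {V : Type*} {G : SimpleGraph V} (m : Sym2 V → ℝ) {u v : V}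
    (w : G.Walk u v) : ℝ :=
  (w.edges.map m).sum

/-- The distance `d_m(u,v)`: the infimum of `m`-lengths of walks joining `u` and `v`. -/
noncomputable def graphDist {V : Type*} (G : SimpleGraph V) (m : Sym2 V → ℝ) (u v : V) : ℝ :=
  sInf {L : ℝ | ∃ w : G.Walk u v, walkLength m w = L}

/-- `m` is an `L^p` metric on `G`: positive on edges, with `Σ_e m(e)^p < ∞`. -/
def IsLpMetric {V : Type*} (G : SimpleGraph V) (p : ℝ) (m : Sym2 V → ℝ) : Prop :=
  (∀ e ∈ G.edgeSet, 0 < m e) ∧ Summable fun e : G.edgeSet => m (e : Sym2 V) ^ p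

/-- `γ : ℕ → V` is a half-infinite (self-avoiding) path in `G`. -/
def IsInfPath {V : Type*} (G : SimpleGraph V) (γ : ℕ → V) : Prop :=
  (∀ n, G.Adj (γ n) (γ (n + 1))) ∧ Function.Injective γ

/-- The `m`-length of an infinite path. -/
noncomputable def pathLength {V : Type*} (m : Sym2 V → ℝ) (γ : ℕ → V) : ℝ≥0∞ :=
  ∑' n, ENNReal.ofReal (m s(γ n, γ (n + 1)))

/-- A family of infinite paths is `p`-null if some `L^p` metric gives all of them
infinite length. -/
def IsPNull {V : Type*} (G : SimpleGraph V) (p : ℝ) (Γ : Set (ℕ → V)) : Prop :=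
  ∃ m : Sym2 V → ℝ, IsLpMetric G p m ∧ ∀ γ ∈ Γ, pathLength m γ = ⊤

/-- `x` is a `d_m`-Cauchy sequence of vertices. -/
def CauchyIn {V : Type*} (G : SimpleGraph V) (m : Sym2 V → ℝ) (x : ℕ → V) : Prop :=
  ∀ ε : ℝ, 0 < ε → ∃ N, ∀ j ≥ N, ∀ k ≥ N, graphDist G m (x j) (x k) < ε

/-- `x` converges to a vertex of `G` in the metric `d_m`. -/
def ConvergesToVertex {V : Type*} (G : SimpleGraph V) (m : Sym2 V → ℝ) (x : ℕ → V) : Prop :=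
  ∃ v : V, Tendsto (fun n => graphDist G m (x n) v) atTop (𝓝 0)

/-- `m` is a `p`-resolving metric: it is `L^p`, and for every boundary point of the
`d_m`-completion (represented by a Cauchy sequence of vertices not converging to any
vertex), the family of infinite paths converging to that boundary point is `p`-null. -/
def IsResolving {V : Type*} (G : SimpleGraph V) (p : ℝ) (m : Sym2 V → ℝ) : Prop :=
  IsLpMetric G p m ∧
  ∀ x : ℕ → V, CauchyIn G m x → ¬ ConvergesToVertex G m x →
    IsPNull G p
      {γ | IsInfPath G γ ∧ Tendsto (fun n => graphDist G m (γ n) (x n)) atTop (𝓝 0)}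

/-- `G` is `p`-resolvable. -/
def Resolvable {V : Type*} (G : SimpleGraph V) (p : ℝ) : Prop :=
  ∃ m : Sym2 V → ℝ, IsResolving G p m

/-- `|df(e)|` for an unordered edge. -/
noncomputable def edgeAbsDiff {V : Type*} (f : V → ℝ) : Sym2 V → ℝ :=
  Sym2.lift ⟨fun u v => |f u - f v|, fun u v => abs_sub_comm (f u) (f v)⟩

/-- The graph on `ℤ^n`, two lattice points adjacent iff their `ℓ¹` distance is `1`. -/
def latticeGraph (n : ℕ) : SimpleGraph (Fin n → ℤ) where
  Adj x y := (∑ i, |x i - y i|) = 1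
  symm := by
    constructor
    intro x y (h : (∑ i, |x i - y i|) = 1)
    show (∑ i, |y i - x i|) = 1
    rw [← h]
    exact Finset.sum_congr rfl fun i _ => abs_sub_comm _ _
  loopless := by
    constructor
    intro x h
    simp at h

/-- The graph on `ℤ` where `n` is adjacent to `n ± 1`. -/
def zGraph : SimpleGraph ℤ where
  Adj a b := a = b + 1 ∨ b = a + 1
  symm := ⟨fun a b h => h.symm⟩
  loopless := ⟨fun a h => by rcases h with h | h <;> omega⟩

/-- a countable union of `p`-null families of infinite paths is `p`-null. -/
theorem pnull_countable_union {V : Type*} (p : ℝ) (hp : 1 ≤ p) (G : SimpleGraph V)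
    (hconn : G.Connected) (hlf : LocFin G) (Γ : ℕ → Set (ℕ → V))
    (hpath : ∀ n, ∀ γ ∈ Γ n, IsInfPath G γ)
    (hnull : ∀ n, IsPNull G p (Γ n)) :
    IsPNull G p (⋃ n, Γ n) := by
  have hp0 : (0:ℝ) < p := lt_of_lt_of_le one_pos hp
  have hpne : p ≠ 0 := ne_of_gt hp0
  choose m hmLp hmInf using hnull
  set S : ℕ → ℝ := fun n => ∑' e : G.edgeSet, m n (e : Sym2 V) ^ p with hS
  have hSnonneg : ∀ n, 0 ≤ S n := fun n => tsum_nonneg (fun e =>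
    Real.rpow_nonneg (le_of_lt ((hmLp n).1 e e.2)) p)
  set c : ℕ → ℝ := fun n => (((1:ℝ)/2) ^ n / (S n + 1)) ^ p⁻¹ with hc
  have hcpos : ∀ n, 0 < c n := fun n => Real.rpow_pos_of_pos
    (div_pos (pow_pos (by norm_num) n) (by linarith [hSnonneg n])) _
  set g : ℕ → Sym2 V → ℝ := fun n e => (c n * m n e) ^ p with hg
  have hgnonneg : ∀ n e, e ∈ G.edgeSet → 0 ≤ g n e := fun n e he =>
    Real.rpow_nonneg (mul_nonneg (hcpos n).le ((hmLp n).1 e he).le) p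
  have hgpos : ∀ n e, e ∈ G.edgeSet → 0 < g n e := fun n e he =>
    Real.rpow_pos_of_pos (mul_pos (hcpos n) ((hmLp n).1 e he)) p
  have hcp : ∀ n, c n ^ p = ((1:ℝ)/2) ^ n / (S n + 1) := fun n =>
    Real.rpow_inv_rpow (div_nonneg (pow_nonneg (by norm_num) n)
      (by linarith [hSnonneg n])) hpne
  have hgval : ∀ n, ∀ e ∈ G.edgeSet,
      g n e = (((1:ℝ)/2) ^ n / (S n + 1)) * m n e ^ p := by
    intro n e he
    simp only [hg]
    rw [Real.mul_rpow (hcpos n).le ((hmLp n).1 e he).le, hcp]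
  -- summability of g n over edges and the value of the sum
  have hgsum : ∀ n, Summable fun e : G.edgeSet => g n (e : Sym2 V) := by
    intro n
    refine Summable.congr (((hmLp n).2).mul_left (((1:ℝ)/2) ^ n / (S n + 1))) ?_
    intro e; exact (hgval n e e.2).symm
  have hgtsum_le : ∀ n, (∑' e : G.edgeSet, g n (e : Sym2 V)) ≤ ((1:ℝ)/2) ^ n := by
    intro n
    have : (∑' e : G.edgeSet, g n (e : Sym2 V))
        = (((1:ℝ)/2) ^ n / (S n + 1)) * S n := by
      rw [hS]
      rw [← tsum_mul_left]
      exact tsum_congr fun e => hgval n e e.2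
    have h2 : (0:ℝ) < S n + 1 := by linarith [hSnonneg n]
    rw [this, div_mul_eq_mul_div, div_le_iff₀ h2]
    nlinarith [hSnonneg n, pow_nonneg (by norm_num : (0:ℝ) ≤ 1/2) n]
  -- summability over the product
  have hFnn : (0:ℕ × G.edgeSet → ℝ) ≤ fun q => g q.1 (q.2 : Sym2 V) := by
    intro q; exact hgnonneg q.1 q.2 q.2.2
  have hF : Summable fun q : ℕ × G.edgeSet => g q.1 (q.2 : Sym2 V) := by
    rw [summable_prod_of_nonneg hFnn]
    refine ⟨hgsum, ?_⟩
    refine Summable.of_nonneg_of_le (fun n => tsum_nonneg fun e => hgnonneg n e e.2)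
      hgtsum_le (summable_geometric_of_lt_one (by norm_num) (by norm_num))
  have hF' : Summable fun q : G.edgeSet × ℕ => g q.2 (q.1 : Sym2 V) := by
    have := (Equiv.prodComm (G.edgeSet) ℕ).summable_iff
      (f := fun q : ℕ × G.edgeSet => g q.1 (q.2 : Sym2 V))
    exact this.mpr hF
  have hF'nn : (0:G.edgeSet × ℕ → ℝ) ≤ fun q => g q.2 (q.1 : Sym2 V) := by
    intro q; exact hgnonneg q.2 q.1 q.1.2
  have hslice : ∀ e : G.edgeSet, Summable fun n => g n (e : Sym2 V) :=
    ((summable_prod_of_nonneg hF'nn).mp hF').1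
  have hcol : Summable fun e : G.edgeSet => ∑' n, g n (e : Sym2 V) :=
    ((summable_prod_of_nonneg hF'nn).mp hF').2
  -- the combined metric
  refine ⟨fun e => if e ∈ G.edgeSet then (∑' n, g n e) ^ p⁻¹ else 0, ⟨?_, ?_⟩, ?_⟩
  · intro e he
    simp only [if_pos he]
    refine Real.rpow_pos_of_pos ?_ _
    calc (0:ℝ) < g 0 e := hgpos 0 e he
      _ ≤ ∑' n, g n e := Summable.le_tsum (hslice ⟨e, he⟩) 0 (fun j _ => hgnonneg j e he)
  · refine Summable.congr hcol ?_
    intro e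
    simp only [if_pos e.2]
    exact (Real.rpow_inv_rpow (tsum_nonneg fun n => hgnonneg n e e.2) hpne).symm
  · intro γ hγ
    obtain ⟨N, hγN⟩ := Set.mem_iUnion.mp hγ
    have hIP := hpath N γ hγN
    have hedge : ∀ k, s(γ k, γ (k+1)) ∈ G.edgeSet := fun k =>
      (SimpleGraph.mem_edgeSet G).mpr (hIP.1 k)
    have hlow : ∀ k, c N * m N s(γ k, γ (k+1)) ≤
        (if s(γ k, γ (k+1)) ∈ G.edgeSet then (∑' n, g n s(γ k, γ (k+1))) ^ p⁻¹ else 0) := by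
      intro k
      set e := s(γ k, γ (k+1)) with he
      rw [if_pos (hedge k)]
      have h1 : g N e ≤ ∑' n, g n e :=
        Summable.le_tsum (hslice ⟨e, hedge k⟩) N (fun j _ => hgnonneg j e (hedge k))
      calc c N * m N e = (g N e) ^ p⁻¹ := by
            simp only [hg]
            exact (Real.rpow_rpow_inv (mul_nonneg (hcpos N).le
              ((hmLp N).1 e (hedge k)).le) hpne).symm
        _ ≤ (∑' n, g n e) ^ p⁻¹ :=
            Real.rpow_le_rpow (hgnonneg N e (hedge k)) h1 (by positivity)
    rw [pathLength, ← top_le_iff]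
    calc (⊤:ℝ≥0∞) = ENNReal.ofReal (c N) * pathLength (m N) γ := by
          rw [hmInf N γ hγN, ENNReal.mul_top]
          simpa using (hcpos N)
      _ = ∑' k, ENNReal.ofReal (c N * m N s(γ k, γ (k+1))) := by
          rw [pathLength, ← ENNReal.tsum_mul_left]
          exact tsum_congr fun k => (ENNReal.ofReal_mul (hcpos N).le).symm
      _ ≤ _ := ENNReal.tsum_le_tsum fun k =>
          ENNReal.ofReal_le_ofReal (hlow k)
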